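/- Let G be a group, H ≤ G a subgroup, λ : ℂ* → G a group homomorphism with image normalizing H, and m a positive integer. Let H̃₀ = ⋃_{z ∈ ℂ*} Hλ(z) × {z^m} ⊆ G × ℂ*. Then H̃₀ is a subgroup of G × ℂ*, and the subgroup G × {1} acts transitively on the coset space (G × ℂ*)/H̃₀. -/

import Mathlib

/-- The subset `H̃₀ = ⋃_{z ∈ ℂ*} Hλ(z) × {z^m}` of `G × ℂ*`. -/
def Htilde {G : Type*} [Group G] (H : Subgroup G) (lam : ℂˣ →* G) (m : ℕ) :
    Set (G × ℂˣ) :=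
  {p | ∃ h ∈ H, ∃ z : ℂˣ, p = (h * lam z, z ^ m)}

/-- Let `G` be a group, `H ≤ G`, `λ : ℂ* → G` a homomorphism with image normalizing
`H`, and `m` a positive integer.  Then `H̃₀ = ⋃_z Hλ(z) × {z^m}` is a subgroup of
`G × ℂ*`, and `G × {1}` acts transitively on the coset space `(G × ℂ*)/H̃₀`. -/
theorem stmt6 {G : Type*} [Group G] (H : Subgroup G) (lam : ℂˣ →* G)
    (hnorm : ∀ z : ℂˣ, lam z ∈ Subgroup.normalizer (H : Set G)) (m : ℕ) (hm : 0 < m) :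
    (∃ S : Subgroup (G × ℂˣ), (S : Set (G × ℂˣ)) = Htilde H lam m) ∧
    (∀ p q : G × ℂˣ, ∃ g : G, ∃ h ∈ Htilde H lam m,
      ((g, (1 : ℂˣ)) : G × ℂˣ) * p = q * h) := by
  constructor
  · refine ⟨{ carrier := Htilde H lam m, mul_mem' := ?_, one_mem' := ?_, inv_mem' := ?_ }, rfl⟩
    · rintro ⟨a1, a2⟩ ⟨b1, b2⟩ ⟨h1, hh1, z1, heq1⟩ ⟨h2, hh2, z2, heq2⟩
      obtain ⟨rfl, rfl⟩ := Prod.mk.injEq .. ▸ heq1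
      obtain ⟨rfl, rfl⟩ := Prod.mk.injEq .. ▸ heq2
      refine ⟨h1 * (lam z1 * h2 * (lam z1)⁻¹),
        H.mul_mem hh1 ((Subgroup.mem_normalizer_iff.mp (hnorm z1) h2).mp hh2),
        z1 * z2, ?_⟩
      simp [Prod.ext_iff, mul_pow, mul_assoc]
    · exact ⟨1, H.one_mem, 1, by simp [Prod.ext_iff]⟩
    · rintro ⟨a1, a2⟩ ⟨h, hh, z, heq⟩
      obtain ⟨rfl, rfl⟩ := Prod.mk.injEq .. ▸ heq
      refine ⟨lam z⁻¹ * h⁻¹ * (lam z⁻¹)⁻¹,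
        (Subgroup.mem_normalizer_iff.mp (hnorm z⁻¹) h⁻¹).mp (H.inv_mem hh),
        z⁻¹, ?_⟩
      simp [Prod.ext_iff, mul_assoc]
  · rintro ⟨g1, z1⟩ ⟨g2, z2⟩
    obtain ⟨w0, hw0⟩ := Complex.isAlgClosed.exists_pow_nat_eq ((z1 : ℂ) / z2) hm
    have hw0ne : w0 ≠ 0 := by
      intro h; rw [h, zero_pow hm.ne'] at hw0
      exact (div_ne_zero z1.ne_zero z2.ne_zero) hw0.symm
    set w : ℂˣ := Units.mk0 w0 hw0ne with hw
    have hwm : z2 * w ^ m = z1 := by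
      ext
      rw [Units.val_mul, Units.val_pow_eq_pow_val, hw, Units.val_mk0, hw0,
        mul_div_cancel₀ _ (z2.ne_zero : (z2:ℂ) ≠ 0)]
    refine ⟨g2 * lam w * g1⁻¹, (lam w, w ^ m), ⟨1, H.one_mem, w, by simp⟩, ?_⟩
    simp [Prod.ext_iff, hwm, mul_assoc]
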